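/- arXiv:2004.09334 — 2 statements merged into one kernel-verified Lean document; each statement's English description precedes it below -/
import Mathlib

section
/- Second contiguous relation for the Lauricella function: let n ≥ 1, let a, b_1,…,b_n, c_1,…,c_n be complex numbers such that no c_k and no c_k − 1 is a nonpositive integer, and let y ∈ ℂ^n with |y_1|+⋯+|y_n| < 1. Then for each k ∈ {1,…,n}, (a b_k y_k)/((c_k−1) c_k) · F_A^{(n)}(a+1, b_1,…,b_{k−1}, b_k+1, b_{k+1},…,b_n; c_1,…,c_{k−1}, c_k+1, c_{k+1},…,c_n; y) = F_A^{(n)}(a, b_1,…,b_n; c_1,…,c_{k−1}, c_k−1, c_{k+1},…,c_n; y) − F_A^{(n)}(a, b_1,…,b_n; c_1,…,c_n; y). -/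
noncomputable section

open scoped BigOperators

/-- The Pochhammer symbol `(λ)_p = λ(λ+1)⋯(λ+p−1)`. -/
def poch (lam : ℂ) (p : ℕ) : ℂ := (ascPochhammer ℂ p).eval lam

/-- The Lauricella hypergeometric function `F_A^{(n)}(a, b; c; y)`, defined by its
multiple power series (absolutely convergent for `|y_1|+⋯+|y_n| < 1`). -/
def lauricellaFA {n : ℕ} (a : ℂ) (b c y : Fin n → ℂ) : ℂ :=
  ∑' μ : Fin n → ℕ,
    poch a (∑ k, μ k) *
      ∏ k, poch (b k) (μ k) / (poch (c k) (μ k) * (Nat.factorial (μ k) : ℂ)) * y k ^ μ k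

def pochR (x : ℝ) (p : ℕ) : ℝ := (ascPochhammer ℝ p).eval x
@[simp] lemma poch_zero (x : ℂ) : poch x 0 = 1 := by simp [poch]
lemma poch_succ (x : ℂ) (m : ℕ) : poch x (m + 1) = poch x m * (x + m) := ascPochhammer_succ_eval m x
@[simp] lemma pochR_zero (x : ℝ) : pochR x 0 = 1 := by simp [pochR]
lemma pochR_succ (x : ℝ) (m : ℕ) : pochR x (m + 1) = pochR x m * (x + m) := ascPochhammer_succ_eval m x
lemma pochR_nonneg {x : ℝ} (hx : 0 ≤ x) (m : ℕ) : 0 ≤ pochR x m := by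
  induction m with
  | zero => simp
  | succ m ih => rw [pochR_succ]; positivity
lemma poch_ne_zero {x : ℂ} (hx : ∀ p : ℕ, x ≠ -(p : ℂ)) (m : ℕ) : poch x m ≠ 0 := by
  induction m with
  | zero => simp
  | succ m ih =>
      rw [poch_succ]
      exact mul_ne_zero ih (fun h => hx m (by linear_combination h))


lemma poch_succ_left (x : ℂ) (m : ℕ) : poch x (m + 1) = x * poch (x + 1) m := by
  unfold poch
  rw [ascPochhammer_succ_left, Polynomial.eval_mul, Polynomial.eval_X, Polynomial.eval_comp]
  simp

lemma norm_poch_le (a : ℂ) (m : ℕ) : ‖poch a m‖ ≤ pochR ‖a‖ m := by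
  induction m with
  | zero => simp
  | succ m ih =>
      rw [poch_succ, pochR_succ, norm_mul]
      refine mul_le_mul ih ?_ (norm_nonneg _) (pochR_nonneg (norm_nonneg a) m)
      calc ‖a + (m : ℂ)‖ ≤ ‖a‖ + ‖(m : ℂ)‖ := norm_add_le _ _
        _ = ‖a‖ + m := by norm_num

/-- For any `ρ > 1` there is `K` with `(B)_m ≤ K ρ^m ‖(c)_m‖`. -/
lemma exists_poch_ratio_bound {B : ℝ} (hB : 0 ≤ B) {c : ℂ} (hc : ∀ p : ℕ, c ≠ -(p : ℂ))
    {ρ : ℝ} (hρ : 1 < ρ) : ∃ K : ℝ, 0 ≤ K ∧ ∀ m : ℕ, pochR B m ≤ K * (ρ ^ m * ‖poch c m‖) := by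
  obtain ⟨M, hM⟩ := exists_nat_ge (max ‖c‖ ((B + ρ * ‖c‖) / (ρ - 1)))
  have hnorm : ∀ m : ℕ, (0:ℝ) < ‖poch c m‖ := fun m =>
    norm_pos_iff.mpr (poch_ne_zero hc m)
  have hρ0 : (0:ℝ) < ρ := by linarith
  -- key: for m ≥ M, B + m ≤ ρ * ‖c + m‖
  have hkey : ∀ m : ℕ, M ≤ m → B + m ≤ ρ * ‖c + (m : ℂ)‖ := by
    intro m hm
    have hm' : (M : ℝ) ≤ m := by exact_mod_cast hm
    have h1 : ‖c‖ ≤ (m : ℝ) := le_trans (le_trans (le_max_left _ _) hM) hm'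
    have h2 : (B + ρ * ‖c‖) / (ρ - 1) ≤ (m : ℝ) :=
      le_trans (le_trans (le_max_right _ _) hM) hm'
    have h3 : B + ρ * ‖c‖ ≤ (ρ - 1) * m := by
      rw [div_le_iff₀ (by linarith)] at h2; linarith
    have h4 : (m : ℝ) - ‖c‖ ≤ ‖c + (m : ℂ)‖ := by
      calc (m : ℝ) - ‖c‖ = ‖(m : ℂ)‖ - ‖-c‖ := by simp
        _ ≤ ‖(m : ℂ) - -c‖ := norm_sub_norm_le _ _
        _ = ‖c + (m : ℂ)‖ := by rw [sub_neg_eq_add, add_comm]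
    nlinarith [mul_le_mul_of_nonneg_left h4 hρ0.le]
  set g : ℕ → ℝ := fun m => pochR B m / (ρ ^ m * ‖poch c m‖) with hg
  have hgnonneg : ∀ m, 0 ≤ g m := fun m =>
    div_nonneg (pochR_nonneg hB m) (by positivity)
  have hdecr : ∀ m, M ≤ m → g (m + 1) ≤ g m := by
    intro m hm
    have h := hkey m hm
    have hcm : (0:ℝ) < ‖c + (m : ℂ)‖ := by
      rw [norm_pos_iff]
      intro hz
      exact hc m (by linear_combination hz)
    have heq : g (m + 1) = g m * ((B + m) / (ρ * ‖c + (m : ℂ)‖)) := by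
      rw [hg]
      simp only
      rw [pochR_succ, poch_succ, norm_mul, pow_succ]
      field_simp
    rw [heq]
    calc g m * ((B + m) / (ρ * ‖c + (m : ℂ)‖)) ≤ g m * 1 := by
          apply mul_le_mul_of_nonneg_left _ (hgnonneg m)
          rw [div_le_one (by positivity)]
          linarith
      _ = g m := mul_one _
  have hgM : ∀ m, M ≤ m → g m ≤ g M := by
    intro m hm
    induction m, hm using Nat.le_induction with
    | base => exact le_refl _
    | succ m hm ih => exact le_trans (hdecr m hm) ih
  refine ⟨∑ i ∈ Finset.range (M + 1), g i, Finset.sum_nonneg fun i _ => hgnonneg i, ?_⟩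
  intro m
  have hKm : g m ≤ ∑ i ∈ Finset.range (M + 1), g i := by
    rcases le_or_gt m M with h | h
    · exact Finset.single_le_sum (fun i _ => hgnonneg i) (Finset.mem_range.mpr (by omega))
    · exact le_trans (hgM m h.le)
        (Finset.single_le_sum (fun i _ => hgnonneg i) (Finset.mem_range.mpr (by omega)))
  have := mul_le_mul_of_nonneg_right hKm (mul_pos (pow_pos hρ0 m) (hnorm m)).le
  rwa [hg, div_mul_cancel₀ _ (mul_pos (pow_pos hρ0 m) (hnorm m)).ne'] at this

/-- 1-d summability of `Σ (A)_S x^S / S!` for `0 ≤ x < 1`, `0 ≤ A`. -/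
lemma summable_one_dim {A x : ℝ} (hA : 0 ≤ A) (hx0 : 0 ≤ x) (hx1 : x < 1) :
    Summable (fun S : ℕ => pochR A S * x ^ S / (Nat.factorial S : ℝ)) := by
  set r : ℝ := (1 + x) / 2 with hr
  have hxr : x < r := by rw [hr]; linarith
  have hr1 : r < 1 := by rw [hr]; linarith
  have hr0 : 0 < r := by rw [hr]; linarith
  obtain ⟨M, hM⟩ := exists_nat_ge (A * x / (r - x))
  apply summable_of_ratio_norm_eventually_le hr1
  rw [Filter.eventually_atTop]
  refine ⟨M, fun S hS => ?_⟩
  have hterm : ∀ T : ℕ, 0 ≤ pochR A T * x ^ T / (Nat.factorial T : ℝ) := fun T => by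
    have := pochR_nonneg hA T
    positivity
  rw [Real.norm_of_nonneg (hterm _), Real.norm_of_nonneg (hterm _)]
  have hfac : (Nat.factorial (S + 1) : ℝ) = (S + 1) * (Nat.factorial S : ℝ) := by
    rw [Nat.factorial_succ]; push_cast; ring
  have hstep : pochR A (S + 1) * x ^ (S + 1) / (Nat.factorial (S + 1) : ℝ) =
      (pochR A S * x ^ S / (Nat.factorial S : ℝ)) * ((A + S) * x / (S + 1)) := by
    rw [pochR_succ, pow_succ, hfac]
    have h1 : (Nat.factorial S : ℝ) ≠ 0 := Nat.cast_ne_zero.mpr (Nat.factorial_ne_zero S)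
    have h2 : ((S : ℝ) + 1) ≠ 0 := by positivity
    field_simp
  rw [hstep]
  rw [mul_comm r _]
  apply mul_le_mul_of_nonneg_left _ (hterm S)
  -- (A + S) * x / (S + 1) ≤ r
  rw [div_le_iff₀ (by positivity : (0:ℝ) < (S:ℝ) + 1)]
  have hMS : (M : ℝ) ≤ S := by exact_mod_cast hS
  have h3 : A * x ≤ (r - x) * S := by
    have h4 : A * x / (r - x) ≤ (S : ℝ) := le_trans hM hMS
    rw [div_le_iff₀ (by linarith)] at h4
    linarith
  nlinarith

/-- n-dim summability of the real majorant. -/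
lemma summable_real_multi {n : ℕ} {A : ℝ} (hA : 0 ≤ A) {z : Fin n → ℝ}
    (hz : ∀ k, 0 ≤ z k) (hx : ∑ k, z k < 1) :
    Summable (fun μ : Fin n → ℕ =>
      pochR A (∑ k, μ k) * ∏ k, z k ^ μ k / (Nat.factorial (μ k) : ℝ)) := by
  set x : ℝ := ∑ k, z k with hxdef
  have hx0 : 0 ≤ x := Finset.sum_nonneg fun k _ => hz k
  set f : (Fin n → ℕ) → ℝ :=
    fun μ => pochR A (∑ k, μ k) * ∏ k, z k ^ μ k / (Nat.factorial (μ k) : ℝ) with hf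
  have hfnonneg : ∀ μ, 0 ≤ f μ := by
    intro μ
    apply mul_nonneg (pochR_nonneg hA _)
    apply Finset.prod_nonneg
    intro k _
    have := hz k
    positivity
  have hsum1 := summable_one_dim hA hx0 hx
  have hterm1 : ∀ S : ℕ, 0 ≤ pochR A S * x ^ S / (Nat.factorial S : ℝ) := fun S => by
    have := pochR_nonneg hA S
    positivity
  -- the key per-degree identity
  have hdeg : ∀ S : ℕ, ∑ μ ∈ Finset.piAntidiag Finset.univ S, f μ
      = pochR A S * x ^ S / (Nat.factorial S : ℝ) := by
    intro S
    have h1 : ∀ μ ∈ Finset.piAntidiag Finset.univ S,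
        f μ = pochR A S * ((Nat.multinomial Finset.univ μ : ℝ) * ∏ k, z k ^ μ k)
          / (Nat.factorial S : ℝ) := by
      intro μ hμ
      rw [Finset.mem_piAntidiag] at hμ
      obtain ⟨hμS, -⟩ := hμ
      have hspec := Nat.multinomial_spec (s := Finset.univ) (f := μ)
      rw [hμS] at hspec
      have hprodfac : (0:ℝ) < ∏ k, (Nat.factorial (μ k) : ℝ) := by
        apply Finset.prod_pos
        intro k _
        exact_mod_cast Nat.factorial_pos (μ k)
      have hSfac : (Nat.factorial S : ℝ)
          = (∏ k, (Nat.factorial (μ k) : ℝ)) * (Nat.multinomial Finset.univ μ : ℝ) := by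
        rw [← hspec]; push_cast; ring
      rw [hf]
      simp only
      rw [hμS, Finset.prod_div_distrib, hSfac]
      have hmn : (0:ℝ) < (Nat.multinomial Finset.univ μ : ℝ) := by
        exact_mod_cast Nat.multinomial_pos (s := Finset.univ) (f := μ)
      field_simp
    rw [Finset.sum_congr rfl h1, ← Finset.sum_div, ← Finset.mul_sum,
      ← Finset.sum_pow_eq_sum_piAntidiag Finset.univ z S]
  apply summable_of_sum_le hfnonneg (c := ∑' S : ℕ, pochR A S * x ^ S / (Nat.factorial S : ℝ))
  intro u
  set N : ℕ := u.sup (fun μ => ∑ k, μ k) with hN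
  have hsubset : u ⊆ (Finset.range (N + 1)).biUnion
      (fun S => Finset.piAntidiag Finset.univ S) := by
    intro μ hμ
    rw [Finset.mem_biUnion]
    refine ⟨∑ k, μ k, Finset.mem_range.mpr (Nat.lt_succ_of_le (Finset.le_sup hμ)), ?_⟩
    rw [Finset.mem_piAntidiag]
    exact ⟨rfl, fun i _ => Finset.mem_univ i⟩
  calc ∑ μ ∈ u, f μ
      ≤ ∑ μ ∈ (Finset.range (N + 1)).biUnion (fun S => Finset.piAntidiag Finset.univ S), f μ :=
        Finset.sum_le_sum_of_subset_of_nonneg hsubset (fun μ _ _ => hfnonneg μ)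
    _ = ∑ S ∈ Finset.range (N + 1), ∑ μ ∈ Finset.piAntidiag Finset.univ S, f μ := by
        apply Finset.sum_biUnion
        intro S hS T hT hST
        simp only [Function.onFun]
        rw [Finset.disjoint_left]
        intro μ h1 h2
        rw [Finset.mem_piAntidiag] at h1 h2
        exact hST (h1.1.symm.trans h2.1)
    _ = ∑ S ∈ Finset.range (N + 1), pochR A S * x ^ S / (Nat.factorial S : ℝ) := by
        exact Finset.sum_congr rfl fun S _ => hdeg S
    _ ≤ ∑' S : ℕ, pochR A S * x ^ S / (Nat.factorial S : ℝ) := by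
        apply Summable.sum_le_tsum _ (fun S _ => hterm1 S) hsum1

/-- Summability of the Lauricella series when `Σ|y| < 1`. -/
lemma lauricella_term_summable {n : ℕ} (a : ℂ) (b c : Fin n → ℂ)
    (hc : ∀ k : Fin n, ∀ p : ℕ, c k ≠ -(p : ℂ)) (y : Fin n → ℂ)
    (hy : ∑ k, ‖y k‖ < 1) :
    Summable (fun μ : Fin n → ℕ =>
      poch a (∑ k, μ k) *
        ∏ k, poch (b k) (μ k) / (poch (c k) (μ k) * (Nat.factorial (μ k) : ℂ)) * y k ^ μ k) := by
  have hyn : ∑ k, ‖y k‖ < 1 := by simpa using hy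
  set t : ℝ := ∑ k, ‖y k‖ with ht
  have ht0 : 0 ≤ t := Finset.sum_nonneg fun k _ => norm_nonneg _
  set ρ : ℝ := if t = 0 then 2 else (1 + t) / (2 * t) with hρ
  have hρ1 : 1 < ρ := by
    rw [hρ]
    split_ifs with h
    · norm_num
    · rw [lt_div_iff₀ (by cases' lt_or_eq_of_le ht0 with h' h'; linarith; exact absurd h'.symm h)]
      have : 0 < t := lt_of_le_of_ne ht0 (Ne.symm h)
      linarith
  have hρt : ρ * t < 1 := by
    rw [hρ]
    split_ifs with h
    · rw [h]; norm_num
    · have h' : 0 < t := lt_of_le_of_ne ht0 (Ne.symm h)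
      rw [div_mul_eq_mul_div, mul_comm (2:ℝ) t, ← div_div, mul_div_assoc,
        div_self (ne_of_gt h'), mul_one, div_lt_one (by norm_num)]
      linarith
  have hρ0 : (0:ℝ) < ρ := by linarith
  choose K hK0 hK using fun k : Fin n =>
    exists_poch_ratio_bound (norm_nonneg (b k)) (hc k) hρ1
  set z : Fin n → ℝ := fun k => ρ * ‖y k‖ with hz
  have hz0 : ∀ k, 0 ≤ z k := fun k => mul_nonneg hρ0.le (norm_nonneg _)
  have hzsum : ∑ k, z k < 1 := by
    rw [hz]
    simp only
    rw [← Finset.mul_sum]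
    exact hρt
  have hmaj := (summable_real_multi (norm_nonneg a) hz0 hzsum).mul_left (∏ k, K k)
  apply Summable.of_norm
  apply Summable.of_nonneg_of_le (fun μ => norm_nonneg _) _ hmaj
  intro μ
  rw [norm_mul, norm_prod]
  have hfac : ∀ k : Fin n,
      ‖poch (b k) (μ k) / (poch (c k) (μ k) * (Nat.factorial (μ k) : ℂ)) * y k ^ μ k‖
        ≤ K k * (z k ^ μ k / (Nat.factorial (μ k) : ℝ)) := by
    intro k
    rw [norm_mul, norm_div, norm_mul, norm_pow]
    have hpc : (0:ℝ) < ‖poch (c k) (μ k)‖ := norm_pos_iff.mpr (poch_ne_zero (hc k) (μ k))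
    have hfp : (0:ℝ) < ‖(Nat.factorial (μ k) : ℂ)‖ := by
      rw [Complex.norm_natCast]
      exact_mod_cast Nat.factorial_pos (μ k)
    have h1 : ‖poch (b k) (μ k)‖ ≤ K k * (ρ ^ μ k * ‖poch (c k) (μ k)‖) :=
      le_trans (norm_poch_le (b k) (μ k)) (hK k (μ k))
    have hnf : ‖(Nat.factorial (μ k) : ℂ)‖ = (Nat.factorial (μ k) : ℝ) := by
      rw [Complex.norm_natCast]
    calc ‖poch (b k) (μ k)‖ / (‖poch (c k) (μ k)‖ * ‖(Nat.factorial (μ k) : ℂ)‖) * ‖y k‖ ^ μ k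
        ≤ K k * (ρ ^ μ k * ‖poch (c k) (μ k)‖) / (‖poch (c k) (μ k)‖ * ‖(Nat.factorial (μ k) : ℂ)‖)
            * ‖y k‖ ^ μ k := by
          gcongr
      _ = K k * (z k ^ μ k / (Nat.factorial (μ k) : ℝ)) := by
          have hfne : ((Nat.factorial (μ k) : ℝ)) ≠ 0 :=
            Nat.cast_ne_zero.mpr (Nat.factorial_ne_zero _)
          rw [hz, hnf]
          simp only
          rw [mul_pow]
          have hpc2 : ‖poch (c k) (μ k)‖ ≠ 0 := by
            exact hpc.ne'
          field_simp [hpc2]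
  calc ‖poch a (∑ k, μ k)‖ *
        ∏ k, ‖poch (b k) (μ k) / (poch (c k) (μ k) * (Nat.factorial (μ k) : ℂ)) * y k ^ μ k‖
      ≤ pochR ‖a‖ (∑ k, μ k) * ∏ k, K k * (z k ^ μ k / (Nat.factorial (μ k) : ℝ)) := by
        apply mul_le_mul (norm_poch_le _ _) _ (Finset.prod_nonneg fun k _ => norm_nonneg _)
          (pochR_nonneg (norm_nonneg a) _)
        exact Finset.prod_le_prod (fun k _ => norm_nonneg _) (fun k _ => hfac k)
    _ = (∏ k, K k) * (pochR ‖a‖ (∑ k, μ k) * ∏ k, z k ^ μ k / (Nat.factorial (μ k) : ℝ)) := by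
        rw [Finset.prod_mul_distrib]
        ring

/-- the scalar (k-factor) identity -/
lemma scalar_key (a ck bk yk P : ℂ) (m : ℕ) (hck : ∀ p : ℕ, ck ≠ -(p : ℂ))
    (hck1 : ck - 1 ≠ 0) :
    a * P * (poch bk (m + 1) / (poch (ck - 1) (m + 1) * (Nat.factorial (m + 1) : ℂ))
        * yk ^ (m + 1))
      - a * P * (poch bk (m + 1) / (poch ck (m + 1) * (Nat.factorial (m + 1) : ℂ))
        * yk ^ (m + 1))
      = a * bk * yk / ((ck - 1) * ck) *
          (P * (poch (bk + 1) m / (poch (ck + 1) m * (Nat.factorial m : ℂ)) * yk ^ m)) := by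
  have hck0 : ck ≠ 0 := by simpa using hck 0
  have hckm : ck + (m : ℂ) ≠ 0 := fun h => hck m (by linear_combination h)
  have hD : poch (ck + 1) m ≠ 0 :=
    poch_ne_zero (fun p h => hck (p + 1) (by push_cast; linear_combination h)) m
  have hEne : poch ck m ≠ 0 := poch_ne_zero hck m
  have hDE : poch (ck + 1) m = poch ck m * (ck + m) / ck := by
    have h1 : poch ck m * (ck + m) = ck * poch (ck + 1) m := by
      rw [← poch_succ, poch_succ_left]
    field_simp
    linear_combination -h1
  have hfacm : ((Nat.factorial m : ℂ)) ≠ 0 := Nat.cast_ne_zero.mpr (Nat.factorial_ne_zero m)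
  have hm1 : ((m : ℂ) + 1) ≠ 0 := by
    have : ((m + 1 : ℕ) : ℂ) ≠ 0 := Nat.cast_ne_zero.mpr (Nat.succ_ne_zero m)
    push_cast at this
    exact this
  have hfacs : ((Nat.factorial (m + 1) : ℂ)) = ((m : ℂ) + 1) * (Nat.factorial m : ℂ) := by
    rw [Nat.factorial_succ]; push_cast; ring
  rw [poch_succ_left bk, poch_succ_left (ck - 1), sub_add_cancel, poch_succ ck, hDE,
    hfacs, pow_succ]
  field_simp
  ring

lemma term_key {n : ℕ} (a : ℂ) (b c y : Fin n → ℂ) (k : Fin n)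
    (hck : ∀ p : ℕ, c k ≠ -(p : ℂ)) (hck1 : c k - 1 ≠ 0) (ν : Fin n → ℕ) :
    (poch a (∑ j, Function.update ν k (ν k + 1) j) *
        ∏ j, poch (b j) (Function.update ν k (ν k + 1) j) /
          (poch (Function.update c k (c k - 1) j) (Function.update ν k (ν k + 1) j) *
            (Nat.factorial (Function.update ν k (ν k + 1) j) : ℂ)) *
          y j ^ Function.update ν k (ν k + 1) j)
      - (poch a (∑ j, Function.update ν k (ν k + 1) j) *
        ∏ j, poch (b j) (Function.update ν k (ν k + 1) j) /
          (poch (c j) (Function.update ν k (ν k + 1) j) *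
            (Nat.factorial (Function.update ν k (ν k + 1) j) : ℂ)) *
          y j ^ Function.update ν k (ν k + 1) j)
      = a * b k * y k / ((c k - 1) * c k) *
        (poch (a + 1) (∑ j, ν j) *
          ∏ j, poch (Function.update b k (b k + 1) j) (ν j) /
            (poch (Function.update c k (c k + 1) j) (ν j) * (Nat.factorial (ν j) : ℂ)) *
            y j ^ ν j) := by
  have hSμ : ∑ j, Function.update ν k (ν k + 1) j = (∑ j, ν j) + 1 := by
    rw [Finset.sum_update_of_mem (Finset.mem_univ k),
      Finset.sum_eq_sum_sdiff_singleton_add (Finset.mem_univ k) ν]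
    ring
  rw [hSμ, poch_succ_left a]
  rw [Finset.prod_eq_mul_prod_sdiff_singleton_of_mem (Finset.mem_univ k),
    Finset.prod_eq_mul_prod_sdiff_singleton_of_mem (Finset.mem_univ k),
    Finset.prod_eq_mul_prod_sdiff_singleton_of_mem (Finset.mem_univ k)
      (fun j => poch (Function.update b k (b k + 1) j) (ν j) /
        (poch (Function.update c k (c k + 1) j) (ν j) * (Nat.factorial (ν j) : ℂ)) * y j ^ ν j)]
  have hR1 : ∀ j ∈ Finset.univ \ {k},
      poch (b j) (Function.update ν k (ν k + 1) j) /
          (poch (Function.update c k (c k - 1) j) (Function.update ν k (ν k + 1) j) *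
            (Nat.factorial (Function.update ν k (ν k + 1) j) : ℂ)) *
          y j ^ Function.update ν k (ν k + 1) j
        = poch (b j) (ν j) / (poch (c j) (ν j) * (Nat.factorial (ν j) : ℂ)) * y j ^ ν j := by
    intro j hj
    rw [Finset.mem_sdiff, Finset.mem_singleton] at hj
    rw [Function.update_of_ne hj.2, Function.update_of_ne hj.2]
  have hR2 : ∀ j ∈ Finset.univ \ {k},
      poch (b j) (Function.update ν k (ν k + 1) j) /
          (poch (c j) (Function.update ν k (ν k + 1) j) *
            (Nat.factorial (Function.update ν k (ν k + 1) j) : ℂ)) *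
          y j ^ Function.update ν k (ν k + 1) j
        = poch (b j) (ν j) / (poch (c j) (ν j) * (Nat.factorial (ν j) : ℂ)) * y j ^ ν j := by
    intro j hj
    rw [Finset.mem_sdiff, Finset.mem_singleton] at hj
    rw [Function.update_of_ne hj.2]
  have hR3 : ∀ j ∈ Finset.univ \ {k},
      poch (Function.update b k (b k + 1) j) (ν j) /
          (poch (Function.update c k (c k + 1) j) (ν j) * (Nat.factorial (ν j) : ℂ)) *
          y j ^ ν j
        = poch (b j) (ν j) / (poch (c j) (ν j) * (Nat.factorial (ν j) : ℂ)) * y j ^ ν j := by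
    intro j hj
    rw [Finset.mem_sdiff, Finset.mem_singleton] at hj
    rw [Function.update_of_ne hj.2, Function.update_of_ne hj.2]
  rw [Finset.prod_congr rfl hR1, Finset.prod_congr rfl hR2, Finset.prod_congr rfl hR3]
  simp only [Function.update_self]
  have := scalar_key a (c k) (b k) (y k) (poch (a + 1) (∑ j, ν j)) (ν k) hck hck1
  set R : ℂ := ∏ j ∈ Finset.univ \ {k},
    poch (b j) (ν j) / (poch (c j) (ν j) * (Nat.factorial (ν j) : ℂ)) * y j ^ ν j
  linear_combination R * this

/-- Second contiguous relation for the Lauricella function: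
`(a b_k y_k)/((c_k−1)c_k) F_A^{(n)}(a+1, b+e_k; c+e_k; y)
  = F_A^{(n)}(a, b; c−e_k; y) − F_A^{(n)}(a, b; c; y)`. -/
theorem lauricellaFA_contiguous_second {n : ℕ} (hn : 1 ≤ n) (a : ℂ) (b c : Fin n → ℂ)
    (hc : ∀ k : Fin n, ∀ p : ℕ, c k ≠ -(p : ℂ))
    (hc' : ∀ k : Fin n, ∀ p : ℕ, c k - 1 ≠ -(p : ℂ)) (y : Fin n → ℂ)
    (hy : ∑ k, ‖y k‖ < 1) (k : Fin n) :
    a * b k * y k / ((c k - 1) * c k) *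
        lauricellaFA (a + 1) (Function.update b k (b k + 1))
          (Function.update c k (c k + 1)) y =
      lauricellaFA a b (Function.update c k (c k - 1)) y - lauricellaFA a b c y := by
  classical
  have hck1 : c k - 1 ≠ 0 := by simpa using hc' k 0
  have hcmin : ∀ j : Fin n, ∀ p : ℕ, Function.update c k (c k - 1) j ≠ -(p : ℂ) := by
    intro j p
    by_cases hj : j = k
    · subst hj; rw [Function.update_self]; exact hc' j p
    · rw [Function.update_of_ne hj]; exact hc j p
  set t1 : (Fin n → ℕ) → ℂ := fun μ =>
    poch a (∑ j, μ j) *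
      ∏ j, poch (b j) (μ j) /
        (poch (Function.update c k (c k - 1) j) (μ j) * (Nat.factorial (μ j) : ℂ)) * y j ^ μ j
    with ht1
  set t2 : (Fin n → ℕ) → ℂ := fun μ =>
    poch a (∑ j, μ j) *
      ∏ j, poch (b j) (μ j) /
        (poch (c j) (μ j) * (Nat.factorial (μ j) : ℂ)) * y j ^ μ j with ht2
  have h1 : Summable t1 := lauricella_term_summable a b _ hcmin y hy
  have h2 : Summable t2 := lauricella_term_summable a b c hc y hy
  set σ : (Fin n → ℕ) → (Fin n → ℕ) := fun ν => Function.update ν k (ν k + 1) with hσ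
  have hinj : Function.Injective σ := by
    intro ν ν' h
    funext j
    by_cases hj : j = k
    · subst hj
      have := congrFun h j
      simp only [hσ, Function.update_self] at this
      omega
    · have := congrFun h j
      simp only [hσ, Function.update_of_ne hj] at this
      exact this
  have hdiff0 : ∀ μ : Fin n → ℕ, μ k = 0 → t1 μ = t2 μ := by
    intro μ h0
    rw [ht1, ht2]
    simp only
    congr 1
    apply Finset.prod_congr rfl
    intro j _
    by_cases hj : j = k
    · subst hj
      rw [Function.update_self, h0]
      simp
    · rw [Function.update_of_ne hj]
  have hsupp : Function.support (fun μ => t1 μ - t2 μ) ⊆ Set.range σ := by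
    intro μ hμ
    rw [Function.mem_support] at hμ
    have hk : μ k ≠ 0 := fun h0 => hμ (by rw [hdiff0 μ h0, sub_self])
    refine ⟨Function.update μ k (μ k - 1), ?_⟩
    funext j
    by_cases hj : j = k
    · subst hj
      simp only [hσ, Function.update_self]
      omega
    · simp only [hσ, Function.update_of_ne hj]
  calc a * b k * y k / ((c k - 1) * c k) *
        lauricellaFA (a + 1) (Function.update b k (b k + 1)) (Function.update c k (c k + 1)) y
      = ∑' ν : Fin n → ℕ, a * b k * y k / ((c k - 1) * c k) *
          (poch (a + 1) (∑ j, ν j) *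
            ∏ j, poch (Function.update b k (b k + 1) j) (ν j) /
              (poch (Function.update c k (c k + 1) j) (ν j) * (Nat.factorial (ν j) : ℂ)) *
              y j ^ ν j) := tsum_mul_left.symm
    _ = ∑' ν : Fin n → ℕ, (t1 (σ ν) - t2 (σ ν)) := by
        apply tsum_congr
        intro ν
        simpa only [ht1, ht2, hσ] using (term_key a b c y k (hc k) hck1 ν).symm
    _ = ∑' μ : Fin n → ℕ, (t1 μ - t2 μ) := hinj.tsum_eq hsupp
    _ = lauricellaFA a b (Function.update c k (c k - 1)) y - lauricellaFA a b c y := by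
        rw [Summable.tsum_sub h1 h2]
        rfl
end
end

section
/- Uniqueness for the Dirichlet problem (Theorem of Section 7): let m > 2, 1 ≤ n ≤ m, α_1,…,α_n ∈ (0,1/2), and let Ω be a bounded open subset of R_m^{n+}. Suppose u: cl(Ω) → ℝ is continuous on the closure of Ω, continuously differentiable on the closure with (∏_{k=1}^n x_k^{2α_k})·∇u extending continuously to cl(Ω), twice continuously differentiable on Ω, satisfies H_α^{(m,n)}(u) = 0 at every point of Ω, and vanishes on the entire topological boundary of Ω. Then u ≡ 0 on cl(Ω). Consequently, a regular solution of the Dirichlet problem for H_α^{(m,n)}(u) = 0 with prescribed continuous boundary data, if it exists, is unique. -/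
noncomputable section

open scoped BigOperators
open Filter

/-- The partial derivative `∂u/∂x_i` of a function `u : ℝ^m → ℝ`. -/
def pd {m : ℕ} (u : (Fin m → ℝ) → ℝ) (i : Fin m) (x : Fin m → ℝ) : ℝ :=
  fderiv ℝ u x (Pi.single i 1)

/-- The singular elliptic operator
`H_α^{(m,n)}(u) = Σ_{i=1}^m ∂²u/∂x_i² + Σ_{k=1}^n (2α_k/x_k) ∂u/∂x_k`. -/
def Hop {m n : ℕ} (hnm : n ≤ m) (α : Fin n → ℝ) (u : (Fin m → ℝ) → ℝ)
    (x : Fin m → ℝ) : ℝ :=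
  (∑ i, pd (pd u i) i x) +
    ∑ k, 2 * α k / x (Fin.castLE hnm k) * pd u (Fin.castLE hnm k) x

lemma second_deriv_test {f f' : ℝ → ℝ} {c : ℝ}
    (hf : ∀ᶠ t in nhds (0:ℝ), HasDerivAt f (f' t) t)
    (hf' : HasDerivAt f' c 0) (hmax : IsLocalMax f 0) : c ≤ 0 := by
  by_contra hc
  push_neg at hc
  have hd0 : f' 0 = 0 := by
    have h1 := hmax.deriv_eq_zero
    have h2 := hf.self_of_nhds.deriv
    rw [← h2, h1]
  have hslope : Tendsto (fun t => f' t / t) (nhdsWithin 0 {0}ᶜ) (nhds c) := by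
    have h := hasDerivAt_iff_tendsto_slope.1 hf'
    have he : slope f' 0 = fun t => f' t / t := by
      funext t; simp [slope_def_field, hd0]
    rwa [he] at h
  have hev : ∀ᶠ t in nhdsWithin (0:ℝ) {0}ᶜ, 0 < f' t / t :=
    hslope.eventually (eventually_gt_nhds hc)
  rw [eventually_nhdsWithin_iff] at hev
  have hall : ∀ᶠ t in nhds (0:ℝ),
      (t ∈ ({0}ᶜ : Set ℝ) → 0 < f' t / t) ∧ HasDerivAt f (f' t) t ∧ f t ≤ f 0 :=
    hev.and (hf.and hmax)
  obtain ⟨δ, hδpos, hδ⟩ := Metric.eventually_nhds_iff.1 hall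
  set b := δ / 2 with hb
  have hbpos : 0 < b := by positivity
  have hbδ : ∀ t ∈ Set.Icc (0:ℝ) b, dist t 0 < δ := by
    intro t ht
    rw [Real.dist_eq, sub_zero, abs_of_nonneg ht.1]
    calc t ≤ b := ht.2
    _ < δ := by rw [hb]; linarith
  have hmono : StrictMonoOn f (Set.Icc 0 b) := by
    apply strictMonoOn_of_deriv_pos (convex_Icc 0 b)
    · intro t ht
      exact ((hδ (hbδ t ht)).2.1).differentiableAt.continuousAt.continuousWithinAt
    · intro t ht
      rw [interior_Icc] at ht
      have h := hδ (hbδ t ⟨le_of_lt ht.1, le_of_lt ht.2⟩)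
      have hpos := h.1 (by simp [ne_of_gt ht.1])
      rw [(h.2.1).deriv]
      rcases div_pos_iff.1 hpos with ⟨h1, _⟩ | ⟨_, h2⟩
      · exact h1
      · linarith [ht.1]
  have h1 : f 0 < f b := hmono (Set.left_mem_Icc.2 hbpos.le) (Set.right_mem_Icc.2 hbpos.le) hbpos
  have h2 : f b ≤ f 0 := (hδ (hbδ b (Set.right_mem_Icc.2 hbpos.le))).2.2
  linarith

lemma pdd_nonpos {m : ℕ} {Ω : Set (Fin m → ℝ)} (hΩopen : IsOpen Ω)
    {v : (Fin m → ℝ) → ℝ} (hv : ContDiffOn ℝ 2 v Ω) {y : Fin m → ℝ} (hy : y ∈ Ω)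
    (hmax : IsLocalMax v y) (i : Fin m) : pd (pd v i) i y ≤ 0 := by
  set e : Fin m → ℝ := Pi.single i 1 with he
  set L : ℝ → (Fin m → ℝ) := fun t => y + t • e with hL
  have hLd : ∀ t : ℝ, HasDerivAt L e t := by
    intro t
    have h := ((hasDerivAt_id t).smul_const e).const_add y
    rw [one_smul] at h
    exact h
  have hLc : Continuous L := by fun_prop
  have hL0 : L 0 = y := by simp [hL]
  have hLΩ : ∀ᶠ t in nhds (0:ℝ), L t ∈ Ω := by
    have : Tendsto L (nhds 0) (nhds y) := by
      rw [← hL0]; exact hLc.continuousAt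
    exact this.eventually (hΩopen.mem_nhds hy)
  have hvdiff : DifferentiableOn ℝ v Ω := hv.differentiableOn (by norm_num)
  have hfd : ContDiffOn ℝ 1 (fderiv ℝ v) Ω := hv.fderiv_of_isOpen hΩopen (by norm_num)
  have hgd : DifferentiableOn ℝ (pd v i) Ω := by
    have := (hfd.differentiableOn one_ne_zero).clm_apply (differentiableOn_const e)
    exact this
  have hfderiv : ∀ᶠ t in nhds (0:ℝ), HasDerivAt (fun s => v (L s)) (pd v i (L t)) t := by
    filter_upwards [hLΩ] with t ht
    have h1 : HasFDerivAt v (fderiv ℝ v (L t)) (L t) :=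
      (hvdiff.differentiableAt (hΩopen.mem_nhds ht)).hasFDerivAt
    exact h1.comp_hasDerivAt t (hLd t)
  have hg' : HasDerivAt (fun t => pd v i (L t)) (pd (pd v i) i y) 0 := by
    have h1 : HasFDerivAt (pd v i) (fderiv ℝ (pd v i) y) y :=
      (hgd.differentiableAt (hΩopen.mem_nhds hy)).hasFDerivAt
    rw [← hL0] at h1
    have := h1.comp_hasDerivAt 0 (hLd 0)
    rw [hL0] at this
    exact this
  have hmaxL : IsLocalMax (fun t => v (L t)) 0 := by
    have hT : Tendsto L (nhds 0) (nhds y) := by rw [← hL0]; exact hLc.continuousAt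
    have := hT.eventually hmax
    simpa [IsLocalMax, IsMaxFilter, hL0] using this
  exact second_deriv_test hfderiv hg' hmaxL

set_option maxHeartbeats 1000000 in
lemma aux_max {m n : ℕ} (hn : 1 ≤ n) (hnm : n ≤ m) (α : Fin n → ℝ)
    (hα : ∀ k, 0 < α k) (Ω : Set (Fin m → ℝ)) (hΩopen : IsOpen Ω)
    (hΩbdd : Bornology.IsBounded Ω)
    (hΩsub : Ω ⊆ {x : Fin m → ℝ | ∀ k : Fin n, 0 < x (Fin.castLE hnm k)})
    (u : (Fin m → ℝ) → ℝ) (hucont : ContinuousOn u (closure Ω))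
    (huC2 : ContDiffOn ℝ 2 u Ω) (hsol : ∀ x ∈ Ω, Hop hnm α u x = 0)
    (hbdry : ∀ x ∈ frontier Ω, u x = 0) :
    ∀ x ∈ closure Ω, u x ≤ 0 := by
  intro x hx
  by_contra hpos
  push_neg at hpos
  set k0 : Fin n := ⟨0, hn⟩ with hk0
  set j0 : Fin m := Fin.castLE hnm k0 with hj0
  set π : (Fin m → ℝ) →L[ℝ] ℝ := ContinuousLinearMap.proj j0 with hπ
  set w : (Fin m → ℝ) → ℝ := fun p => p j0 * p j0 with hw
  have hwd : ∀ p : Fin m → ℝ, HasFDerivAt w (p j0 • π + p j0 • π) p := fun p =>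
    (π.hasFDerivAt (x := p)).mul (π.hasFDerivAt (x := p))
  have hK : IsCompact (closure Ω) :=
    Metric.isCompact_of_isClosed_isBounded isClosed_closure hΩbdd.closure
  have hne : (closure Ω).Nonempty := ⟨x, hx⟩
  obtain ⟨z, hzK, hz⟩ := hK.exists_isMaxOn hne hucont
  set M := u z with hM
  have hMpos : 0 < M := lt_of_lt_of_le hpos (hz hx)
  have hwc : ContinuousOn w (closure Ω) := (π.continuous.mul π.continuous).continuousOn
  obtain ⟨zb, _, hzb⟩ := hK.exists_isMaxOn hne hwc
  set B : ℝ := max (w zb) 1 with hB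
  have hBpos : 0 < B := lt_of_lt_of_le one_pos (le_max_right _ _)
  have hBle : ∀ p ∈ closure Ω, w p ≤ B := fun p hp => le_trans (hzb hp) (le_max_left _ _)
  set ε : ℝ := M / (2 * B) with hε
  have hεpos : 0 < ε := by positivity
  set v : (Fin m → ℝ) → ℝ := fun p => u p + ε * w p with hv
  have hvcont : ContinuousOn v (closure Ω) := hucont.add (continuousOn_const.mul hwc)
  obtain ⟨y, hyK, hy⟩ := hK.exists_isMaxOn hne hvcont
  have hvyM : M ≤ v y := by
    have h1 : v z ≤ v y := hy hzK
    have h2 : M ≤ v z := by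
      have h3 : 0 ≤ w z := mul_self_nonneg _
      have : v z = M + ε * w z := rfl
      nlinarith
    linarith
  have hyΩ : y ∈ Ω := by
    have hyc := hyK
    rw [closure_eq_self_union_frontier] at hyc
    rcases hyc with h | h
    · exact h
    · exfalso
      have h1 : v y = ε * w y := by rw [hv]; simp [hbdry y h]
      have h2 : ε * w y ≤ ε * B := mul_le_mul_of_nonneg_left (hBle y hyK) hεpos.le
      have h3 : ε * B = M / 2 := by
        rw [hε]; field_simp
      rw [h1] at hvyM
      rw [h3] at h2
      linarith
  have hloc : IsLocalMax v y :=
    hy.isLocalMax (Filter.mem_of_superset (hΩopen.mem_nhds hyΩ) subset_closure)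
  have hudiff : DifferentiableOn ℝ u Ω := huC2.differentiableOn (by norm_num)
  have hufd : ContDiffOn ℝ 1 (fderiv ℝ u) Ω := huC2.fderiv_of_isOpen hΩopen (by norm_num)
  -- first derivatives of v on Ω
  have hpdv : ∀ p ∈ Ω, ∀ i : Fin m, pd v i p
      = pd u i p + (ε * (2 * (Pi.single i 1 : Fin m → ℝ) j0)) * p j0 := by
    intro p hp i
    have hu' : HasFDerivAt u (fderiv ℝ u p) p :=
      (hudiff.differentiableAt (hΩopen.mem_nhds hp)).hasFDerivAt
    have hv' : HasFDerivAt v (fderiv ℝ u p + ε • (p j0 • π + p j0 • π)) p :=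
      hu'.add ((hwd p).const_mul ε)
    show fderiv ℝ v p (Pi.single i 1) = _
    rw [hv'.fderiv]
    rw [hπ]
    simp only [ContinuousLinearMap.add_apply, ContinuousLinearMap.coe_smul',
      Pi.smul_apply, ContinuousLinearMap.proj_apply, smul_eq_mul]
    rw [pd]
    ring
  -- second derivatives relation at y
  have hpdud : ∀ i : Fin m, DifferentiableAt ℝ (pd u i) y := by
    intro i
    have h1 : DifferentiableOn ℝ (fun p => fderiv ℝ u p (Pi.single i 1)) Ω :=
      (hufd.differentiableOn one_ne_zero).clm_apply (differentiableOn_const _)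
    exact h1.differentiableAt (hΩopen.mem_nhds hyΩ)
  have hpdd : ∀ i : Fin m, pd (pd v i) i y
      = pd (pd u i) i y + ε * (2 * (Pi.single i 1 : Fin m → ℝ) j0 * (Pi.single i 1 : Fin m → ℝ) j0) := by
    intro i
    set ci : ℝ := ε * (2 * (Pi.single i 1 : Fin m → ℝ) j0) with hci
    have hev : pd v i =ᶠ[nhds y] fun p => pd u i p + ci * p j0 := by
      filter_upwards [hΩopen.mem_nhds hyΩ] with p hp
      exact hpdv p hp i
    have h1 : HasFDerivAt (fun p : Fin m → ℝ => pd u i p + ci * p j0)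
        (fderiv ℝ (pd u i) y + ci • π) y :=
      (hpdud i).hasFDerivAt.add ((π.hasFDerivAt (x := y)).const_mul ci)
    have h2 : fderiv ℝ (pd v i) y = fderiv ℝ (pd u i) y + ci • π := by
      rw [hev.fderiv_eq, h1.fderiv]
    show fderiv ℝ (pd v i) y (Pi.single i 1) = _
    rw [h2]
    rw [hπ]
    simp only [ContinuousLinearMap.add_apply, ContinuousLinearMap.coe_smul',
      Pi.smul_apply, ContinuousLinearMap.proj_apply, smul_eq_mul]
    rw [pd, hci]
    ring
  -- vanishing gradient of v at y
  have hfz : fderiv ℝ v y = 0 := hloc.fderiv_eq_zero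
  have hpdvz : ∀ i : Fin m, pd v i y = 0 := by
    intro i; rw [pd, hfz]; simp
  have hpduy : ∀ i : Fin m, pd u i y
      = -((ε * (2 * (Pi.single i 1 : Fin m → ℝ) j0)) * y j0) := by
    intro i
    have h := hpdv y hyΩ i
    rw [hpdvz i] at h
    linarith
  -- v is C² on Ω
  have hvC2 : ContDiffOn ℝ 2 v Ω :=
    huC2.add ((contDiff_const.mul (π.contDiff.mul π.contDiff)).contDiffOn)
  have hsd : ∀ i : Fin m, pd (pd v i) i y ≤ 0 := fun i =>
    pdd_nonpos hΩopen hvC2 hyΩ hloc i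
  -- sum computations
  have hs2 : (∑ i : Fin m, ε * (2 * (Pi.single i 1 : Fin m → ℝ) j0 * (Pi.single i 1 : Fin m → ℝ) j0))
      = ε * 2 := by
    have h : ∀ i : Fin m, ε * (2 * (Pi.single i 1 : Fin m → ℝ) j0 * (Pi.single i 1 : Fin m → ℝ) j0)
        = if j0 = i then ε * 2 else 0 := by
      intro i
      rcases eq_or_ne j0 i with h | h
      · subst h
        rw [if_pos rfl, Pi.single_eq_same]
        ring
      · rw [if_neg h, Pi.single_eq_of_ne h]
        ring
    rw [Finset.sum_congr rfl (fun i _ => h i), Finset.sum_ite_eq]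
    simp
  have hsum2 : ∑ i, pd (pd v i) i y = (∑ i, pd (pd u i) i y) + ε * 2 := by
    rw [← hs2, ← Finset.sum_add_distrib]
    exact Finset.sum_congr rfl (fun i _ => hpdd i)
  have hyj0 : 0 < y j0 := hΩsub hyΩ k0
  have hdrift : (∑ k, 2 * α k / y (Fin.castLE hnm k) * pd u (Fin.castLE hnm k) y)
      = -(ε * (4 * α k0)) := by
    have h : ∀ k : Fin n, 2 * α k / y (Fin.castLE hnm k) * pd u (Fin.castLE hnm k) y
        = if k0 = k then -(ε * (4 * α k0)) else 0 := by
      intro k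
      rw [hpduy]
      rcases eq_or_ne k0 k with h | h
      · subst h
        rw [if_pos rfl, ← hj0, Pi.single_eq_same]
        field_simp
        ring
      · rw [if_neg h]
        have hne : j0 ≠ Fin.castLE hnm k := by
          rw [hj0]
          simp only [ne_eq, Fin.castLE_inj]
          exact h
        rw [Pi.single_eq_of_ne hne]
        ring
    rw [Finset.sum_congr rfl (fun k _ => h k), Finset.sum_ite_eq]
    simp
  have hHop := hsol y hyΩ
  rw [Hop, hdrift] at hHop
  have hS2u : (∑ i, pd (pd u i) i y) = ε * (4 * α k0) := by linarith
  have hfinal : (0:ℝ) < ∑ i, pd (pd v i) i y := by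
    rw [hsum2, hS2u]
    have hαk := hα k0
    have h4 : 0 < ε * (4 * α k0) := mul_pos hεpos (by linarith)
    have h5 : 0 < ε * 2 := mul_pos hεpos (by norm_num)
    linarith
  have hnp : (∑ i, pd (pd v i) i y) ≤ 0 := Finset.sum_nonpos (fun i _ => hsd i)
  linarith

lemma Hop_neg {m n : ℕ} (hnm : n ≤ m) (α : Fin n → ℝ) (u : (Fin m → ℝ) → ℝ)
    (x : Fin m → ℝ) : Hop hnm α (fun p => -u p) x = -(Hop hnm α u x) := by
  have h1 : ∀ i : Fin m, pd (fun p => -u p) i = fun p => -(pd u i p) := by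
    intro i; funext p
    rw [pd, pd, fderiv_fun_neg]
    simp
  have h2 : ∀ (i : Fin m) (p : Fin m → ℝ),
      pd (fun q => -(pd u i q)) i p = -pd (pd u i) i p := by
    intro i p
    rw [pd, pd, fderiv_fun_neg]
    simp
  rw [Hop, Hop]
  simp only [h1, h2]
  rw [neg_add]
  congr 1
  · rw [← Finset.sum_neg_distrib]
  · rw [← Finset.sum_neg_distrib]
    exact Finset.sum_congr rfl (fun k _ => by ring)

/-- Uniqueness for the Dirichlet problem: a regular solution of `H_α^{(m,n)}(u) = 0`
in a bounded domain `Ω ⊆ R_m^{n+}` that is continuous on `cl(Ω)`, continuously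
differentiable up to the closure with continuous weighted gradient
`(∏_k x_k^{2α_k})∇u`, and vanishes on the whole boundary of `Ω`, vanishes identically.
Consequently, the solution of the Dirichlet problem, if it exists, is unique. -/
theorem dirichlet_uniqueness {m n : ℕ} (hm : 2 < m) (hn : 1 ≤ n) (hnm : n ≤ m)
    (α : Fin n → ℝ) (hα : ∀ k, α k ∈ Set.Ioo (0 : ℝ) (1 / 2))
    (Ω : Set (Fin m → ℝ)) (hΩopen : IsOpen Ω) (hΩbdd : Bornology.IsBounded Ω)
    (hΩsub : Ω ⊆ {x : Fin m → ℝ | ∀ k : Fin n, 0 < x (Fin.castLE hnm k)})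
    (u : (Fin m → ℝ) → ℝ)
    (hucont : ContinuousOn u (closure Ω))
    (huC1 : ContDiffOn ℝ 1 u (closure Ω))
    (hgrad : ∀ i : Fin m, ContinuousOn
      (fun x : Fin m → ℝ =>
        (∏ k, x (Fin.castLE hnm k) ^ (2 * α k)) * pd u i x) (closure Ω))
    (huC2 : ContDiffOn ℝ 2 u Ω)
    (hsol : ∀ x ∈ Ω, Hop hnm α u x = 0)
    (hbdry : ∀ x ∈ frontier Ω, u x = 0) :
    ∀ x ∈ closure Ω, u x = 0 := by
  have hα' : ∀ k, 0 < α k := fun k => (hα k).1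
  have h1 := aux_max hn hnm α hα' Ω hΩopen hΩbdd hΩsub u hucont huC2 hsol hbdry
  have h2 := aux_max hn hnm α hα' Ω hΩopen hΩbdd hΩsub (fun p => -u p)
    hucont.neg huC2.neg
    (fun p hp => by rw [Hop_neg, hsol p hp, neg_zero])
    (fun p hp => by simp [hbdry p hp])
  intro x hx
  have ha := h1 x hx
  have hb := h2 x hx
  simp only [neg_nonpos] at hb
  linarith
end
end
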